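/- arXiv:1101.3730 — 2 statements merged into one kernel-verified Lean document; each statement's English description precedes it below -/
import Mathlib

section
/- For the Hahn-type parameters: fix λ > 0 and τ ∈ (−√3 λ/2, 0), set c = 2/(2 + λ + 2τ/√3) and A = (−τ/√3)·c. Then with β = √(c'(1−c')(2A+c')(2A+c'+1)) / (2(A+c')) evaluated at c' = 1 − c, the rescaled band endpoint satisfies (2/c)·β = √(λ+1) · √(1 − (2τ/(√3 λ))²). In particular the points (τ, ±(2/c)β) lie on the ellipse x²/( (√3λ/2)² ) + y²/(λ+1) = 1. -/
/-- The rescaled Hahn band endpoint lies on the inscribed ellipse of the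
rescaled hexagon. -/
theorem arctic_ellipse
    (lam τ : ℝ) (hlam : 0 < lam)
    (hτ : τ ∈ Set.Ioo (-(Real.sqrt 3 * lam / 2)) 0)
    (c : ℝ) (hc : c = 2 / (2 + lam + 2 * τ / Real.sqrt 3))
    (A : ℝ) (hA : A = (-τ / Real.sqrt 3) * c)
    (c' : ℝ) (hc' : c' = 1 - c)
    (β : ℝ)
    (hβ : β = Real.sqrt (c' * (1 - c') * (2 * A + c') * (2 * A + c' + 1)) /
      (2 * (A + c'))) :
    (2 / c) * β = Real.sqrt (lam + 1) *
        Real.sqrt (1 - (2 * τ / (Real.sqrt 3 * lam)) ^ 2) ∧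
      τ ^ 2 / (Real.sqrt 3 * lam / 2) ^ 2 + ((2 / c) * β) ^ 2 / (lam + 1) = 1 := by
  obtain ⟨hτ1, hτ2⟩ := hτ
  have hs : (0:ℝ) < Real.sqrt 3 := Real.sqrt_pos.mpr (by norm_num)
  have hs2 : Real.sqrt 3 ^ 2 = 3 := Real.sq_sqrt (by norm_num)
  set u : ℝ := τ / Real.sqrt 3 with hu
  have h2u : u * Real.sqrt 3 = τ := div_mul_cancel₀ τ hs.ne'
  have hu2 : τ ^ 2 = 3 * u ^ 2 := by
    rw [hu, div_pow, hs2]; field_simp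
  have huneg : u < 0 := div_neg_of_neg_of_pos hτ2 hs
  have hulb : -lam < 2 * u := by nlinarith [hτ1, hs, h2u]
  set D : ℝ := 2 + lam + 2 * τ / Real.sqrt 3 with hD
  have hDu : D = 2 + lam + 2 * u := by rw [hD, hu]; ring
  have hDpos : 0 < D := by rw [hDu]; nlinarith
  clear_value u D
  have hcD : c = 2 / D := hc
  have hcpos : 0 < c := by rw [hcD]; positivity
  have hAu : A = -u * (2 / D) := by
    rw [hA, hcD, hu]; ring
  have hc'u : c' = (lam + 2 * u) / D := by
    rw [hc', hcD]
    field_simp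
    rw [hDu]; ring
  have htsq : τ ^ 2 ≤ 3 * lam ^ 2 / 4 := by
    nlinarith [hτ1, hτ2, hs2, hs, mul_pos hs hlam]
  have husq : u ^ 2 ≤ lam ^ 2 / 4 := by nlinarith [hu2]
  have hK : 0 ≤ lam ^ 2 - 4 * u ^ 2 := by nlinarith
  have hM : 0 ≤ (lam + 1) * (lam ^ 2 - 4 * u ^ 2) := by positivity
  -- product under square root
  have hP : c' * (1 - c') * (2 * A + c') * (2 * A + c' + 1)
      = ((lam + 1) * (lam ^ 2 - 4 * u ^ 2)) * (2 / D ^ 2) ^ 2 := by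
    have h1c : 1 - c' = 2 / D := by rw [hc']; rw [hcD]; ring
    rw [h1c, hc'u, hAu]
    field_simp
    rw [hDu]; ring
  have h3 : A + c' = lam / D := by
    rw [hAu, hc'u]; field_simp; ring
  have hsqrtP : Real.sqrt (c' * (1 - c') * (2 * A + c') * (2 * A + c' + 1))
      = Real.sqrt ((lam + 1) * (lam ^ 2 - 4 * u ^ 2)) * (2 / D ^ 2) := by
    rw [hP, Real.sqrt_mul hM, Real.sqrt_sq (by positivity)]
  have hmain : (2 / c) * β = Real.sqrt ((lam + 1) * (lam ^ 2 - 4 * u ^ 2)) / lam := by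
    rw [hβ, hsqrtP, h3, hcD]
    field_simp
  have hE : 1 - (2 * τ / (Real.sqrt 3 * lam)) ^ 2 = (lam ^ 2 - 4 * u ^ 2) / lam ^ 2 := by
    rw [div_pow, mul_pow, mul_pow, hs2, hu2]
    field_simp
    ring
  have hRHS : Real.sqrt (lam + 1) * Real.sqrt (1 - (2 * τ / (Real.sqrt 3 * lam)) ^ 2)
      = Real.sqrt ((lam + 1) * (lam ^ 2 - 4 * u ^ 2)) / lam := by
    rw [hE, Real.sqrt_div hK, Real.sqrt_sq hlam.le,
      Real.sqrt_mul (by positivity : (0:ℝ) ≤ lam + 1)]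
    ring
  have hfst : (2 / c) * β = Real.sqrt (lam + 1) *
      Real.sqrt (1 - (2 * τ / (Real.sqrt 3 * lam)) ^ 2) := by
    rw [hmain, hRHS]
  refine ⟨hfst, ?_⟩
  have hsq : ((2 / c) * β) ^ 2 = (lam + 1) * (lam ^ 2 - 4 * u ^ 2) / lam ^ 2 := by
    rw [hmain, div_pow, Real.sq_sqrt hM]
  rw [hsq]
  rw [div_pow, mul_pow, hs2, hu2]
  field_simp
  ring
end

section
/- Let K^sym(x,y) = K_{2k}(x,y) − K_{2k}(x,−y) on Y, where K_{2k} is the projection kernel onto span{√w p_0,...,√w p_{2k−1}} in ℓ²(Y ∪ (−Y)) with even weight w. Then K^sym is itself a projection kernel on ℓ²(Y) of rank k: Σ_{z∈Y} K^sym(x,z)K^sym(z,y) = K^sym(x,y) and Σ_{x∈Y} K^sym(x,x) = k. -/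
open Finset Polynomial

/-- The antisymmetrized kernel `K^sym(x,y) = K_{2k}(x,y) - K_{2k}(x,-y)` is a
projection kernel of rank `k` on `ℓ²(Y)`. -/
theorem ksym_is_projection
    (Y : Finset ℝ) (hY : ∀ y ∈ Y, 0 < y)
    (X : Finset ℝ) (hX : X = Y ∪ Y.image (fun y => -y))
    (w : ℝ → ℝ) (hwpos : ∀ x ∈ X, 0 < w x)
    (hweven : ∀ x : ℝ, w (-x) = w x)
    (p : ℕ → Polynomial ℝ)
    (hdeg : ∀ j, j < X.card → (p j).natDegree = j)
    (hparity : ∀ n, ∀ x : ℝ, (p n).eval (-x) = (-1 : ℝ) ^ n * (p n).eval x)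
    (horth : ∀ i j, i < X.card → j < X.card →
      ∑ x ∈ X, w x * (p i).eval x * (p j).eval x = if i = j then 1 else 0)
    (k : ℕ) (hk : 2 * k ≤ X.card)
    (K2k Ksym : ℝ → ℝ → ℝ)
    (hK2k : ∀ x y : ℝ, K2k x y =
      Real.sqrt (w x * w y) * ∑ n ∈ range (2 * k), (p n).eval x * (p n).eval y)
    (hKsym : ∀ x y : ℝ, Ksym x y = K2k x y - K2k x (-y)) :
    (∀ x ∈ Y, ∀ y ∈ Y, ∑ z ∈ Y, Ksym x z * Ksym z y = Ksym x y) ∧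
      ∑ x ∈ Y, Ksym x x = k := by
  have hYX : ∀ y ∈ Y, y ∈ X := by
    intro y hy; rw [hX]; exact Finset.mem_union_left _ hy
  have hwY : ∀ y ∈ Y, 0 < w y := fun y hy => hwpos y (hYX y hy)
  have hdisj : Disjoint Y (Y.image (fun y => -y)) := by
    rw [Finset.disjoint_left]
    intro a ha hb
    obtain ⟨b, hb', rfl⟩ := Finset.mem_image.mp hb
    have h1 := hY b hb'
    have h2 := hY _ ha
    linarith
  have heven_sum : ∀ f : ℝ → ℝ, (∀ x, f (-x) = f x) →
      ∑ x ∈ X, f x = 2 * ∑ y ∈ Y, f y := by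
    intro f hf
    rw [hX, Finset.sum_union hdisj,
      Finset.sum_image (fun a _ b _ h => neg_injective h)]
    have : ∑ y ∈ Y, f (-y) = ∑ y ∈ Y, f y :=
      Finset.sum_congr rfl fun y _ => hf y
    rw [this]; ring
  set c : ℕ → ℝ := fun n => 1 - (-1 : ℝ) ^ n with hc
  have hcodd : ∀ n, Odd n → c n = 2 := by
    intro n hn; simp [hc, hn.neg_one_pow]; norm_num
  have hceven : ∀ n, Even n → c n = 0 := by
    intro n hn; simp [hc, hn.neg_one_pow]
  have hkey : ∀ m n, m < 2 * k → n < 2 * k →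
      c m * c n * ∑ z ∈ Y, w z * (p m).eval z * (p n).eval z
        = if m = n then c m else 0 := by
    intro m n hm hn
    rcases Nat.even_or_odd m with hme | hmo
    · rw [hceven m hme]
      split_ifs with h
      · subst h; rw [hceven m hme]; ring
      · ring
    rcases Nat.even_or_odd n with hne | hno
    · rw [hceven n hne]
      have : m ≠ n := by rintro rfl; exact (Nat.not_even_iff_odd.mpr hmo) hne
      rw [if_neg this]; ring
    have hS : ∑ z ∈ Y, w z * (p m).eval z * (p n).eval z
        = (if m = n then 1 else 0) / 2 := by
      have he : ∀ x : ℝ, w (-x) * (p m).eval (-x) * (p n).eval (-x)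
          = w x * (p m).eval x * (p n).eval x := by
        intro x
        rw [hweven, hparity, hparity, hmo.neg_one_pow, hno.neg_one_pow]; ring
      have h2 := heven_sum (fun x => w x * (p m).eval x * (p n).eval x) he
      rw [horth m n (lt_of_lt_of_le hm hk) (lt_of_lt_of_le hn hk)] at h2
      linarith
    rw [hS, hcodd m hmo, hcodd n hno]
    split_ifs <;> ring
  have hsqrt : ∀ y ∈ Y, Real.sqrt (w y) * Real.sqrt (w y) = w y :=
    fun y hy => Real.mul_self_sqrt (hwY y hy).le
  have hKs : ∀ x, x ∈ Y → ∀ y, Ksym x y =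
      Real.sqrt (w x) * Real.sqrt (w y) *
        ∑ n ∈ range (2 * k), c n * ((p n).eval x * (p n).eval y) := by
    intro x hx y
    rw [hKsym, hK2k, hK2k, hweven, Real.sqrt_mul (hwY x hx).le, ← mul_sub,
      ← Finset.sum_sub_distrib]
    congr 1
    apply Finset.sum_congr rfl
    intro n _
    rw [hparity]
    simp only [hc]
    ring
  constructor
  · intro x hx y hy
    have step1 : ∑ z ∈ Y, Ksym x z * Ksym z y
        = ∑ z ∈ Y, Real.sqrt (w x) * Real.sqrt (w y) * (w z *
            ((∑ m ∈ range (2 * k), c m * ((p m).eval x * (p m).eval z)) *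
             (∑ n ∈ range (2 * k), c n * ((p n).eval z * (p n).eval y)))) := by
      apply Finset.sum_congr rfl
      intro z hz
      rw [hKs x hx z, hKs z hz y]
      linear_combination (Real.sqrt (w x) * Real.sqrt (w y) *
        (∑ n ∈ range (2 * k), c n * ((p n).eval x * (p n).eval z)) *
        (∑ n ∈ range (2 * k), c n * ((p n).eval z * (p n).eval y))) * hsqrt z hz
    rw [step1, hKs x hx y, ← Finset.mul_sum]
    congr 1
    have expand : ∀ z : ℝ, w z *
        ((∑ m ∈ range (2 * k), c m * ((p m).eval x * (p m).eval z)) *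
         (∑ n ∈ range (2 * k), c n * ((p n).eval z * (p n).eval y)))
      = ∑ m ∈ range (2 * k), ∑ n ∈ range (2 * k),
          (c m * c n * (w z * (p m).eval z * (p n).eval z)) *
            ((p m).eval x * (p n).eval y) := by
      intro z
      rw [Finset.sum_mul_sum, Finset.mul_sum]
      apply Finset.sum_congr rfl; intro m _
      rw [Finset.mul_sum]
      apply Finset.sum_congr rfl; intro n _
      ring
    simp only [expand]
    rw [Finset.sum_comm]
    apply Finset.sum_congr rfl
    intro m hm
    rw [Finset.sum_comm]
    have hm' := Finset.mem_range.mp hm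
    calc ∑ n ∈ range (2 * k), ∑ z ∈ Y,
          (c m * c n * (w z * (p m).eval z * (p n).eval z)) *
            ((p m).eval x * (p n).eval y)
        = ∑ n ∈ range (2 * k),
            (c m * c n * ∑ z ∈ Y, w z * (p m).eval z * (p n).eval z) *
              ((p m).eval x * (p n).eval y) := by
          apply Finset.sum_congr rfl; intro n _
          rw [Finset.mul_sum, Finset.sum_mul]
      _ = ∑ n ∈ range (2 * k),
            (if m = n then c m else 0) * ((p m).eval x * (p n).eval y) := by
          apply Finset.sum_congr rfl; intro n hn
          rw [hkey m n hm' (Finset.mem_range.mp hn)]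
      _ = c m * ((p m).eval x * (p m).eval y) := by
          simp only [ite_mul, zero_mul]
          rw [Finset.sum_ite_eq (range (2 * k)) m
            (fun n => c m * ((p m).eval x * (p n).eval y)), if_pos hm]
  · have hcn : ∀ n, n < 2 * k →
        c n * ∑ z ∈ Y, w z * (p n).eval z * (p n).eval z
          = if Odd n then (1 : ℝ) else 0 := by
      intro n hn
      have h := hkey n n hn hn
      rw [if_pos rfl] at h
      rcases Nat.even_or_odd n with hne | hno
      · rw [hceven n hne, if_neg (Nat.not_odd_iff_even.mpr hne)]; ring
      · rw [hcodd n hno] at h ⊢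
        rw [if_pos hno]
        nlinarith [h]
    have step : ∑ x ∈ Y, Ksym x x
        = ∑ n ∈ range (2 * k), (if Odd n then (1 : ℝ) else 0) := by
      have : ∀ x ∈ Y, Ksym x x
          = ∑ n ∈ range (2 * k), c n * (w x * (p n).eval x * (p n).eval x) := by
        intro x hx
        rw [hKs x hx x, Finset.mul_sum]
        apply Finset.sum_congr rfl; intro n _
        linear_combination (c n * (p n).eval x * (p n).eval x) * hsqrt x hx
      rw [Finset.sum_congr rfl this, Finset.sum_comm]
      apply Finset.sum_congr rfl
      intro n hn
      rw [← Finset.mul_sum]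
      exact hcn n (Finset.mem_range.mp hn)
    rw [step]
    have hcount : ∀ K : ℕ, ∑ n ∈ Finset.range (2 * K),
        (if Odd n then (1 : ℝ) else 0) = K := by
      intro K
      induction K with
      | zero => simp
      | succ K ih =>
        have : 2 * (K + 1) = (2 * K + 1) + 1 := by ring
        rw [this, Finset.sum_range_succ, Finset.sum_range_succ, ih]
        simp [Nat.odd_iff, Nat.add_mod]
    exact hcount k
end
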